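/- In a graph inverse semigroup G(E), two nonzero elements ab⁻¹ and cd⁻¹ are D-equivalent (Green's relation) if and only if r(a) = r(c). Consequently, each nonzero D-class of G(E) contains exactly one vertex of E. -/

import Mathlib

/-- A directed graph: vertices, edges, source and range maps. -/
structure DGraph where
  V : Type
  E : Type
  s : E → V
  r : E → V

namespace DGraph

variable {Q : DGraph}

/-- `pOk Q a l` : the list of edges `l` forms a valid path starting at vertex `a`. -/
def pOk (Q : DGraph) : Q.V → List Q.E → Prop
  | _, [] => True
  | a, e :: l => Q.s e = a ∧ pOk Q (Q.r e) l

/-- The end vertex of an edge-list starting at `a`. -/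
def pRng (Q : DGraph) (a : Q.V) (l : List Q.E) : Q.V :=
  l.foldl (fun _ e => Q.r e) a

theorem pRng_append (a : Q.V) (l₁ l₂ : List Q.E) :
    pRng Q a (l₁ ++ l₂) = pRng Q (pRng Q a l₁) l₂ :=
  List.foldl_append

theorem pOk_append {a : Q.V} {l₁ l₂ : List Q.E} (h₁ : pOk Q a l₁)
    (h₂ : pOk Q (pRng Q a l₁) l₂) : pOk Q a (l₁ ++ l₂) := by
  induction l₁ generalizing a with
  | nil => simpa [pRng] using h₂
  | cons e l ih =>
      obtain ⟨he, hl⟩ := h₁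
      exact ⟨he, ih hl h₂⟩

theorem pOk_drop {a : Q.V} {l₁ l₂ : List Q.E} (h : pOk Q a (l₁ ++ l₂)) :
    pOk Q (pRng Q a l₁) l₂ := by
  induction l₁ generalizing a with
  | nil => simpa [pRng] using h
  | cons e l ih => exact ih h.2

/-- A (finite, directed) path in the graph `Q`: a start vertex together with a
compatible list of edges.  Paths of length `0` are vertices. -/
structure GPath (Q : DGraph) where
  start : Q.V
  edges : List Q.E
  ok : pOk Q start edges

/-- The source `s(p)` of a path. -/
def GPath.src (p : GPath Q) : Q.V := p.start

/-- The range `r(p)` of a path. -/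
def GPath.rng (p : GPath Q) : Q.V := pRng Q p.start p.edges

/-- The length `|p|` of a path. -/
def GPath.length (p : GPath Q) : ℕ := p.edges.length

/-- The trivial (length zero) path at a vertex `a`. -/
def GPath.triv (Q : DGraph) (a : Q.V) : GPath Q := ⟨a, [], trivial⟩

/-- Concatenation of composable paths. -/
def GPath.comp (p q : GPath Q) (h : p.rng = q.start) : GPath Q :=
  ⟨p.start, p.edges ++ q.edges, pOk_append p.ok (by
    have hq := q.ok
    rw [← h] at hq
    exact hq)⟩

theorem GPath.comp_rng (p q : GPath Q) (h : p.rng = q.start) :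
    (p.comp q h).rng = q.rng := by
  show pRng Q p.start (p.edges ++ q.edges) = q.rng
  rw [pRng_append, show pRng Q p.start p.edges = q.start from h]
  rfl

theorem exists_sub {p q : GPath Q} (h1 : q.start = p.start)
    (h2 : p.edges <+: q.edges) :
    ∃ w : GPath Q, w.start = p.rng ∧ w.rng = q.rng ∧ p.edges ++ w.edges = q.edges := by
  obtain ⟨t, ht⟩ := h2
  have hok : pOk Q p.start (p.edges ++ t) := by rw [ht, ← h1]; exact q.ok
  refine ⟨⟨p.rng, t, pOk_drop hok⟩, rfl, ?_, ht⟩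
  show pRng Q (pRng Q p.start p.edges) t = pRng Q q.start q.edges
  rw [← pRng_append, ht, ← h1]

/-- If the path `q` decomposes as `p·w`, this is the path `w`. -/
noncomputable def subPath (p q : GPath Q) (h1 : q.start = p.start)
    (h2 : p.edges <+: q.edges) : GPath Q :=
  (exists_sub h1 h2).choose

theorem subPath_spec (p q : GPath Q) (h1 : q.start = p.start)
    (h2 : p.edges <+: q.edges) :
    (subPath p q h1 h2).start = p.rng ∧ (subPath p q h1 h2).rng = q.rng ∧
      p.edges ++ (subPath p q h1 h2).edges = q.edges :=
  (exists_sub h1 h2).choose_spec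

/-- The graph inverse semigroup `G(E)` over the graph `Q`: the element `0`
together with the elements `u v⁻¹` where `u, v` are paths with `r(u) = r(v)`. -/
inductive GIS (Q : DGraph) : Type
  | zero : GIS Q
  | elm (u v : GPath Q) (h : u.rng = v.rng) : GIS Q

instance : Zero (GIS Q) := ⟨GIS.zero⟩

-- Multiplication in the graph inverse semigroup:
-- `u₁v₁⁻¹ · u₂v₂⁻¹ = u₁wv₂⁻¹` if `u₂ = v₁w`, `u₁(v₂w)⁻¹` if `v₁ = u₂w`, `0` otherwise.
open Classical in
noncomputable def GIS.mul : GIS Q → GIS Q → GIS Q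
  | .zero, _ => .zero
  | _, .zero => .zero
  | .elm u₁ v₁ h₁, .elm u₂ v₂ h₂ =>
    if hA : u₂.start = v₁.start ∧ v₁.edges <+: u₂.edges then
      GIS.elm (u₁.comp (subPath v₁ u₂ hA.1 hA.2)
          (by rw [(subPath_spec v₁ u₂ hA.1 hA.2).1, h₁]))
        v₂
        (by rw [GPath.comp_rng, (subPath_spec v₁ u₂ hA.1 hA.2).2.1, h₂])
    else if hB : v₁.start = u₂.start ∧ u₂.edges <+: v₁.edges then
      GIS.elm u₁
        (v₂.comp (subPath u₂ v₁ hB.1 hB.2)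
          (by rw [(subPath_spec u₂ v₁ hB.1 hB.2).1, h₂]))
        (by rw [GPath.comp_rng, (subPath_spec u₂ v₁ hB.1 hB.2).2.1, h₁])
    else .zero

noncomputable instance : Mul (GIS Q) := ⟨GIS.mul⟩

/-- The inversion map of the graph inverse semigroup: `(uv⁻¹)⁻¹ = vu⁻¹`, `0⁻¹ = 0`. -/
def GIS.inv : GIS Q → GIS Q
  | .zero => .zero
  | .elm u v h => .elm v u h.symm

/-- The canonical identification of a path `u` with the element `u · r(u)⁻¹` of `G(E)`. -/
def toGIS (p : GPath Q) : GIS Q := GIS.elm p (GPath.triv Q p.rng) rfl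

end DGraph


namespace DGraph
variable {Q : DGraph}
/-- Green's relation `L`: `x L y` iff `S¹x = S¹y`. -/
def greenL (x y : GIS Q) : Prop :=
  insert x (Set.range fun s => s * x) = insert y (Set.range fun s => s * y)
/-- Green's relation `R`: `x R y` iff `xS¹ = yS¹`. -/
def greenR (x y : GIS Q) : Prop :=
  insert x (Set.range fun s => x * s) = insert y (Set.range fun s => y * s)
/-- Green's relation `D = L ∘ R`. -/
def greenD (x y : GIS Q) : Prop := ∃ z, greenL x z ∧ greenR z y
end DGraph

open DGraph


namespace DGraph
variable {Q : DGraph}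

theorem GPath.ext' {p q : GPath Q} (h1 : p.start = q.start)
    (h2 : p.edges = q.edges) : p = q := by
  cases p; cases q; simp_all

theorem GIS.mul_def (x y : GIS Q) : x * y = GIS.mul x y := rfl

theorem GIS.zero_mul' (x : GIS Q) : (0 : GIS Q) * x = 0 := by
  cases x <;> rfl

theorem GIS.mul_zero' (x : GIS Q) : x * (0 : GIS Q) = 0 := by
  cases x <;> rfl

theorem GIS.elm_congr {a b c d : GPath Q} {h1 : a.rng = b.rng}
    {h2 : c.rng = d.rng} (hac : a = c) (hbd : b = d) :
    GIS.elm a b h1 = GIS.elm c d h2 := by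
  subst hac; subst hbd; rfl

/-- Characterization of the principal left ideal of `elm a b h`. -/
theorem Lset_mem (a b : GPath Q) (h : a.rng = b.rng) (y : GIS Q) :
    y ∈ insert (GIS.elm a b h) (Set.range fun s => s * GIS.elm a b h) ↔
      y = 0 ∨ ∃ (p q : GPath Q) (h' : p.rng = q.rng),
        y = GIS.elm p q h' ∧ q.start = b.start ∧ b.edges <+: q.edges := by
  constructor
  · rintro (rfl | ⟨s, rfl⟩)
    · exact Or.inr ⟨a, b, h, rfl, rfl, List.prefix_refl _⟩
    · cases s with
      | zero => exact Or.inl rfl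
      | elm u₁ v₁ h₁ =>
        beta_reduce
        rw [GIS.mul_def]
        simp only [GIS.mul]
        split_ifs with hA hB
        · refine Or.inr ⟨_, _, ?_, rfl, ?_, ?_⟩
          · rw [GPath.comp_rng, (subPath_spec v₁ a hA.1 hA.2).2.1]; exact h
          · rfl
          · exact List.prefix_refl _
        · refine Or.inr ⟨_, _, ?_, rfl, ?_, ?_⟩
          · rw [GPath.comp_rng, (subPath_spec a v₁ hB.1 hB.2).2.1]; exact h₁
          · rfl
          · exact ⟨(subPath a v₁ hB.1 hB.2).edges, rfl⟩
        · exact Or.inl rfl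
  · rintro (rfl | ⟨p, q, h', rfl, hstart, t, ht⟩)
    · exact Or.inr ⟨0, rfl⟩
    · have htok : pOk Q (a.rng) t := by
        have hq := q.ok
        rw [← ht, hstart] at hq
        have := pOk_drop hq
        rwa [h]
      set v₁ : GPath Q := ⟨a.start, a.edges ++ t, pOk_append a.ok htok⟩ with hv₁
      have hrng : v₁.rng = q.rng := by
        show pRng Q a.start (a.edges ++ t) = q.rng
        rw [pRng_append]
        show pRng Q a.rng t = q.rng
        rw [h]
        show pRng Q (pRng Q b.start b.edges) t = q.rng
        rw [← pRng_append, ht, ← hstart]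
        rfl
      refine Or.inr ⟨GIS.elm p v₁ (h'.trans hrng.symm), ?_⟩
      beta_reduce
      rw [GIS.mul_def]
      simp only [GIS.mul]
      split_ifs with hA hB
      · -- case A: v₁.edges <+: a.edges, so t = []
        have ht0 : t = [] := by
          have hlen : (a.edges ++ t).length ≤ a.edges.length := hA.2.length_le
          simp only [List.length_append] at hlen
          exact List.eq_nil_of_length_eq_zero (by omega)
        have hw := (subPath_spec v₁ a hA.1 hA.2).2.2
        have hw0 : (subPath v₁ a hA.1 hA.2).edges = [] := by
          have : v₁.edges = a.edges := by simp [hv₁, ht0]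
          simp only [this] at hw
          simpa using hw
        refine GIS.elm_congr ?_ ?_
        · exact GPath.ext' rfl (by simp [GPath.comp, hw0])
        · exact GPath.ext' hstart.symm (by rw [← ht, ht0]; simp)
      · -- case B
        have hw := (subPath_spec a v₁ hB.1 hB.2).2.2
        have hwt : (subPath a v₁ hB.1 hB.2).edges = t :=
          List.append_cancel_left hw
        refine GIS.elm_congr rfl ?_
        exact GPath.ext' hstart.symm (by show b.edges ++ _ = q.edges; rw [hwt, ht])
      · exact absurd ⟨rfl, t, rfl⟩ hB

/-- Characterization of the principal right ideal of `elm a b h`. -/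
theorem Rset_mem (a b : GPath Q) (h : a.rng = b.rng) (y : GIS Q) :
    y ∈ insert (GIS.elm a b h) (Set.range fun s => GIS.elm a b h * s) ↔
      y = 0 ∨ ∃ (p q : GPath Q) (h' : p.rng = q.rng),
        y = GIS.elm p q h' ∧ p.start = a.start ∧ a.edges <+: p.edges := by
  constructor
  · rintro (rfl | ⟨s, rfl⟩)
    · exact Or.inr ⟨a, b, h, rfl, rfl, List.prefix_refl _⟩
    · cases s with
      | zero => exact Or.inl (GIS.mul_zero' _)
      | elm u₂ v₂ h₂ =>
        beta_reduce
        rw [GIS.mul_def]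
        simp only [GIS.mul]
        split_ifs with hA hB
        · refine Or.inr ⟨_, _, ?_, rfl, ?_, ?_⟩
          · rw [GPath.comp_rng, (subPath_spec b u₂ hA.1 hA.2).2.1]; exact h₂
          · rfl
          · exact ⟨(subPath b u₂ hA.1 hA.2).edges, rfl⟩
        · refine Or.inr ⟨_, _, ?_, rfl, ?_, ?_⟩
          · rw [GPath.comp_rng, (subPath_spec u₂ b hB.1 hB.2).2.1]; exact h
          · rfl
          · exact List.prefix_refl _
        · exact Or.inl rfl
  · rintro (rfl | ⟨p, q, h', rfl, hstart, t, ht⟩)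
    · exact Or.inr ⟨0, GIS.mul_zero' _⟩
    · have htok : pOk Q (b.rng) t := by
        have hp := p.ok
        rw [← ht, hstart] at hp
        have h2 : pOk Q a.rng t := pOk_drop hp
        rw [h] at h2
        exact h2
      set u₂ : GPath Q := ⟨b.start, b.edges ++ t, pOk_append b.ok htok⟩ with hu₂
      have hrng : u₂.rng = q.rng := by
        show pRng Q b.start (b.edges ++ t) = q.rng
        rw [pRng_append]
        show pRng Q b.rng t = q.rng
        rw [← h]
        show pRng Q (pRng Q a.start a.edges) t = q.rng
        rw [← pRng_append, ht, ← hstart, ← h']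
        rfl
      refine Or.inr ⟨GIS.elm u₂ q hrng, ?_⟩
      beta_reduce
      rw [GIS.mul_def]
      simp only [GIS.mul]
      have hA : u₂.start = b.start ∧ b.edges <+: u₂.edges := ⟨rfl, t, rfl⟩
      rw [dif_pos hA]
      have hw := (subPath_spec b u₂ hA.1 hA.2).2.2
      have hwt : (subPath b u₂ hA.1 hA.2).edges = t :=
        List.append_cancel_left hw
      refine GIS.elm_congr ?_ rfl
      exact GPath.ext' hstart.symm (by show a.edges ++ _ = p.edges; rw [hwt, ht])

theorem GIS.elm_ne_zero (a b : GPath Q) (h : a.rng = b.rng) :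
    GIS.elm a b h ≠ 0 := by
  intro hc
  cases hc

theorem greenL_elm_iff {a b c d : GPath Q} (hab : a.rng = b.rng)
    (hcd : c.rng = d.rng) :
    greenL (GIS.elm a b hab) (GIS.elm c d hcd) ↔ b = d := by
  constructor
  · intro hL
    have h1 : GIS.elm a b hab ∈ insert (GIS.elm c d hcd)
        (Set.range fun s => s * GIS.elm c d hcd) := by
      rw [← hL]; exact Set.mem_insert _ _
    have h2 : GIS.elm c d hcd ∈ insert (GIS.elm a b hab)
        (Set.range fun s => s * GIS.elm a b hab) := by
      rw [hL]; exact Set.mem_insert _ _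
    rw [Lset_mem] at h1 h2
    rcases h1 with h1 | ⟨p, q, h', he, hs, hp⟩
    · exact absurd h1 (GIS.elm_ne_zero _ _ _)
    rcases h2 with h2 | ⟨p', q', h'', he', hs', hp'⟩
    · exact absurd h2 (GIS.elm_ne_zero _ _ _)
    simp only [GIS.elm.injEq] at he he'
    obtain ⟨-, rfl, -⟩ := he
    obtain ⟨-, rfl, -⟩ := he'
    exact GPath.ext' hs'.symm (hp'.sublist.antisymm hp.sublist)
  · rintro rfl
    show _ = _
    ext y
    rw [Lset_mem, Lset_mem]

theorem greenR_elm_iff {a b c d : GPath Q} (hab : a.rng = b.rng)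
    (hcd : c.rng = d.rng) :
    greenR (GIS.elm a b hab) (GIS.elm c d hcd) ↔ a = c := by
  constructor
  · intro hR
    have h1 : GIS.elm a b hab ∈ insert (GIS.elm c d hcd)
        (Set.range fun s => GIS.elm c d hcd * s) := by
      rw [← hR]; exact Set.mem_insert _ _
    have h2 : GIS.elm c d hcd ∈ insert (GIS.elm a b hab)
        (Set.range fun s => GIS.elm a b hab * s) := by
      rw [hR]; exact Set.mem_insert _ _
    rw [Rset_mem] at h1 h2
    rcases h1 with h1 | ⟨p, q, h', he, hs, hp⟩
    · exact absurd h1 (GIS.elm_ne_zero _ _ _)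
    rcases h2 with h2 | ⟨p', q', h'', he', hs', hp'⟩
    · exact absurd h2 (GIS.elm_ne_zero _ _ _)
    simp only [GIS.elm.injEq] at he he'
    obtain ⟨rfl, -, -⟩ := he
    obtain ⟨rfl, -, -⟩ := he'
    exact GPath.ext' hs'.symm (hp'.sublist.antisymm hp.sublist)
  · rintro rfl
    show _ = _
    ext y
    rw [Rset_mem, Rset_mem]

theorem greenL_zero {z : GIS Q} (h : greenL (0 : GIS Q) z) : z = 0 := by
  have hz : z ∈ insert (0 : GIS Q) (Set.range fun s => s * (0 : GIS Q)) := by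
    rw [h]; exact Set.mem_insert _ _
  rcases hz with hz | ⟨s, hs⟩
  · exact hz
  · rw [← hs]
    beta_reduce
    rw [GIS.mul_zero']

theorem greenD_elm_iff {a b c d : GPath Q} (hab : a.rng = b.rng)
    (hcd : c.rng = d.rng) :
    greenD (GIS.elm a b hab) (GIS.elm c d hcd) ↔ a.rng = c.rng := by
  constructor
  · rintro ⟨z, hL, hR⟩
    cases z with
    | zero =>
      exfalso
      have hz := greenL_zero
        (show greenL (0 : GIS Q) (GIS.elm a b hab) from hL.symm)
      exact GIS.elm_ne_zero _ _ _ hz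
    | elm p q hpq =>
      have hb : b = q := (greenL_elm_iff hab hpq).mp hL
      have hc : p = c := (greenR_elm_iff hpq hcd).mp hR
      rw [hab, hb, ← hpq, hc]
  · intro hac
    have hcb : c.rng = b.rng := hac.symm.trans hab
    exact ⟨GIS.elm c b hcb, (greenL_elm_iff hab hcb).mpr rfl,
      (greenR_elm_iff hcb hcd).mpr rfl⟩

theorem triv_rng (v : Q.V) : (GPath.triv Q v).rng = v := rfl

end DGraph


theorem stmt12 (Q : DGraph) :
    (∀ (a b c d : GPath Q) (hab : a.rng = b.rng) (hcd : c.rng = d.rng),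
      greenD (GIS.elm a b hab) (GIS.elm c d hcd) ↔ a.rng = c.rng) ∧
    (∀ x : GIS Q, x ≠ 0 → ∃! v : Q.V, greenD x (toGIS (GPath.triv Q v))) := by
  constructor
  · intro a b c d hab hcd
    exact greenD_elm_iff hab hcd
  · intro x hx
    cases x with
    | zero => exact absurd rfl hx
    | elm a b h =>
      refine ⟨a.rng, ?_, ?_⟩
      · exact (greenD_elm_iff h rfl).mpr rfl
      · intro v hv
        exact ((greenD_elm_iff h rfl).mp hv).symm
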